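/- Let m ≥ 2, let G be the graph on vertex set {1,…,p} (p ≥ m) whose edge set is exactly all pairs within a fixed set of m vertices (a single m-clique and no other edges), let (i,j) be an edge of this clique, and let G' be obtained from G by removing the edge (i,j). Then, writing m̄ = m − 1, the Ising distribution of G' satisfies E_{G'}[X_i X_j] ≥ 1 − 2 m̄ e^{λ} / (e^{m̄λ} + m̄ e^{λ}). -/

import Mathlib

open Real Finset
open scoped Classical

noncomputable section

/-- Value of a spin: `true ↦ +1`, `false ↦ -1`. -/
def confVal (b : Bool) : ℝ := if b then 1 else -1

/-- The Ising interaction `∑_{{i,j}∈E} x_i x_j` (each edge counted once). -/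
def isingEnergy {p : ℕ} (G : SimpleGraph (Fin p)) (x : Fin p → Bool) : ℝ :=
  (1 / 2) * ∑ i : Fin p, ∑ j : Fin p,
    if G.Adj i j then confVal (x i) * confVal (x j) else 0

/-- The partition function `Z_G`. -/
def isingZ {p : ℕ} (lam : ℝ) (G : SimpleGraph (Fin p)) : ℝ :=
  ∑ x : Fin p → Bool, Real.exp (lam * isingEnergy G x)

/-- The ferromagnetic Ising distribution `P_G(x)`. -/
def isingP {p : ℕ} (lam : ℝ) (G : SimpleGraph (Fin p)) (x : Fin p → Bool) : ℝ :=
  Real.exp (lam * isingEnergy G x) / isingZ lam G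

/-- Kullback–Leibler divergence `D(P_G ‖ P_{G'})`. -/
def isingKL {p : ℕ} (lam : ℝ) (G G' : SimpleGraph (Fin p)) : ℝ :=
  ∑ x : Fin p → Bool, isingP lam G x * Real.log (isingP lam G x / isingP lam G' x)

/-- The correlation `E_G[X_i X_j]`. -/
def isingCorr {p : ℕ} (lam : ℝ) (G : SimpleGraph (Fin p)) (i j : Fin p) : ℝ :=
  ∑ x : Fin p → Bool, isingP lam G x * (confVal (x i) * confVal (x j))

/-- Probability of an event under `P_G`. -/
def eventProb {p : ℕ} (lam : ℝ) (G : SimpleGraph (Fin p)) (S : Set (Fin p → Bool)) : ℝ :=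
  ∑ x : Fin p → Bool, if x ∈ S then isingP lam G x else 0

/-- `P_G[X_i = X_j]`. -/
def isingProbEq {p : ℕ} (lam : ℝ) (G : SimpleGraph (Fin p)) (i j : Fin p) : ℝ :=
  eventProb lam G {x | x i = x j}

/-- The edge set of `G` as a `Finset`. -/
def edgeFin {p : ℕ} (G : SimpleGraph (Fin p)) : Finset (Sym2 (Fin p)) :=
  (Set.toFinite G.edgeSet).toFinset

/-- The edit distance `|E Δ E'|` between two graphs. -/
def editDist {p : ℕ} (G G' : SimpleGraph (Fin p)) : ℕ :=
  ((edgeFin G \ edgeFin G') ∪ (edgeFin G' \ edgeFin G)).card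

def SCsum {p : ℕ} (C : Finset (Fin p)) (x : Fin p → Bool) : ℝ := ∑ v ∈ C, confVal (x v)

lemma confVal_sq (b : Bool) : confVal b * confVal b = 1 := by cases b <;> simp [confVal]

lemma SCsum_erase {p : ℕ} (C : Finset (Fin p)) (x : Fin p → Bool) {v : Fin p} (hv : v ∈ C) :
    SCsum C x = confVal (x v) + SCsum (C.erase v) x := by
  unfold SCsum
  rw [← Finset.insert_erase hv, Finset.sum_insert (Finset.notMem_erase _ _)]
  simp [Finset.insert_erase hv]

lemma SCsum_congr {p : ℕ} (C : Finset (Fin p)) {x y : Fin p → Bool}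
    (h : ∀ v ∈ C, x v = y v) : SCsum C x = SCsum C y :=
  Finset.sum_congr rfl fun v hv => by rw [h v hv]

lemma SCsum_update {p : ℕ} (C : Finset (Fin p)) (x : Fin p → Bool) {v : Fin p} (hv : v ∈ C)
    (b : Bool) : SCsum C (Function.update x v b) = SCsum C x - confVal (x v) + confVal b := by
  rw [SCsum_erase C (Function.update x v b) hv, SCsum_erase C x hv,
    SCsum_congr (C.erase v) (y := x) (fun u hu => Function.update_of_ne (Finset.ne_of_mem_erase hu) _ _)]
  simp; ring

lemma energy_formula {p : ℕ} (C : Finset (Fin p)) (G G' : SimpleGraph (Fin p))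
    (hG : ∀ a b, G.Adj a b ↔ a ≠ b ∧ a ∈ C ∧ b ∈ C)
    (i j : Fin p) (hi : i ∈ C) (hj : j ∈ C) (hij : i ≠ j)
    (hG' : G' = G.deleteEdges {s(i, j)}) (x : Fin p → Bool) :
    isingEnergy G' x = ((SCsum C x)^2 - (C.card : ℝ))/2 - confVal (x i) * confVal (x j) := by
  set s : Fin p → ℝ := fun a => confVal (x a) with hs
  have hadj : ∀ a b, G'.Adj a b ↔ (a ≠ b ∧ a ∈ C ∧ b ∈ C) ∧ ¬(a = i ∧ b = j ∨ a = j ∧ b = i) := by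
    subst hG'; intro a b
    rw [SimpleGraph.deleteEdges_adj]
    simp [hG, Sym2.eq_iff]
  have key : ∀ a b : Fin p, (if G'.Adj a b then s a * s b else 0)
      = (if a ∈ C then s a else 0) * (if b ∈ C then s b else 0)
        - (if a = b ∧ a ∈ C then 1 else 0)
        - ((if a = i ∧ b = j then s a * s b else 0) + (if a = j ∧ b = i then s a * s b else 0)) := by
    intro a b
    by_cases hab : a = b
    · subst hab
      have h1 : ¬ (a = i ∧ a = j) := fun ⟨h, h'⟩ => hij (h.symm.trans h')
      have h2 : a = j → ¬ a = i := fun h h' => hij (h'.symm.trans h)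
      have hadj' : ¬ G'.Adj a a := by rw [hadj]; tauto
      by_cases hac : a ∈ C <;> simp [hadj', h1, h2, hac, hs, confVal_sq] <;> exact h2
    · by_cases hac : a ∈ C <;> by_cases hbc : b ∈ C
      · by_cases h1 : a = i ∧ b = j
        · obtain ⟨rfl, rfl⟩ := h1
          have hadj' : ¬ G'.Adj a b := by rw [hadj]; tauto
          simp [hadj', hij, hab, hac, hbc]
        · by_cases h2 : a = j ∧ b = i
          · obtain ⟨rfl, rfl⟩ := h2
            have hadj' : ¬ G'.Adj a b := by rw [hadj]; tauto
            simp [hadj', hij, hij.symm, hab, hac, hbc, h1]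
          · have hadj' : G'.Adj a b := by rw [hadj]; tauto
            simp [hadj', h1, h2, hab, hac, hbc]
      · have h1 : ¬ (a = i ∧ b = j) := fun ⟨_, h'⟩ => hbc (h' ▸ hj)
        have h2 : ¬ (a = j ∧ b = i) := fun ⟨_, h'⟩ => hbc (h' ▸ hi)
        have hadj' : ¬ G'.Adj a b := by rw [hadj]; tauto
        simp [hadj', h1, h2, hab, hac, hbc]
      · have h1 : ¬ (a = i ∧ b = j) := fun ⟨h, _⟩ => hac (h ▸ hi)
        have h2 : ¬ (a = j ∧ b = i) := fun ⟨h, _⟩ => hac (h ▸ hj)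
        have hadj' : ¬ G'.Adj a b := by rw [hadj]; tauto
        simp [hadj', h1, h2, hab, hac, hbc]
      · have h1 : ¬ (a = i ∧ b = j) := fun ⟨h, _⟩ => hac (h ▸ hi)
        have h2 : ¬ (a = j ∧ b = i) := fun ⟨h, _⟩ => hac (h ▸ hj)
        have hadj' : ¬ G'.Adj a b := by rw [hadj]; tauto
        simp [hadj', h1, h2, hab, hac, hbc]
  unfold isingEnergy
  have hsum : ∑ a : Fin p, ∑ b : Fin p, (if G'.Adj a b then confVal (x a) * confVal (x b) else 0)
      = (SCsum C x)^2 - (C.card : ℝ) - 2 * (s i * s j) := by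
    calc ∑ a : Fin p, ∑ b : Fin p, (if G'.Adj a b then confVal (x a) * confVal (x b) else 0)
        = ∑ a : Fin p, ∑ b : Fin p, ((if a ∈ C then s a else 0) * (if b ∈ C then s b else 0)
          - (if a = b ∧ a ∈ C then 1 else 0)
          - ((if a = i ∧ b = j then s a * s b else 0) + (if a = j ∧ b = i then s a * s b else 0))) := by
          refine Finset.sum_congr rfl fun a _ => Finset.sum_congr rfl fun b _ => key a b
      _ = (SCsum C x)^2 - (C.card : ℝ) - 2 * (s i * s j) := by
          simp only [Finset.sum_sub_distrib, Finset.sum_add_distrib]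
          have e1 : ∑ a : Fin p, ∑ b : Fin p, (if a ∈ C then s a else 0) * (if b ∈ C then s b else 0)
              = (SCsum C x)^2 := by
            rw [← Finset.sum_mul_sum]
            simp [Finset.sum_ite_mem, SCsum, sq]; rfl
          have e2 : ∑ a : Fin p, ∑ b : Fin p, (if a = b ∧ a ∈ C then (1:ℝ) else 0) = (C.card : ℝ) := by
            have : ∀ a : Fin p, ∑ b : Fin p, (if a = b ∧ a ∈ C then (1:ℝ) else 0)
                = if a ∈ C then 1 else 0 := by
              intro a
              by_cases hac : a ∈ C <;> simp [hac]
            simp [this, Finset.sum_ite_mem]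
          have e3 : ∑ a : Fin p, ∑ b : Fin p, (if a = i ∧ b = j then s a * s b else 0) = s i * s j := by
            have : ∀ a : Fin p, ∑ b : Fin p, (if a = i ∧ b = j then s a * s b else 0)
                = if a = i then s a * s j else 0 := by
              intro a
              by_cases hai : a = i <;> simp [hai]
            simp [this]
          have e4 : ∑ a : Fin p, ∑ b : Fin p, (if a = j ∧ b = i then s a * s b else 0) = s j * s i := by
            have : ∀ a : Fin p, ∑ b : Fin p, (if a = j ∧ b = i then s a * s b else 0)
                = if a = j then s a * s i else 0 := by
              intro a
              by_cases hai : a = j <;> simp [hai]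
            simp [this]
          rw [e1, e2, e3, e4]; ring
  rw [hsum]; ring

lemma choose_le_exp (lam : ℝ) (hlam : 0 < lam) (n k : ℕ) (hk : k ≤ n)
    (hB : (n:ℝ) + 1 ≤ Real.exp (n * lam)) :
    (n.choose k : ℝ) ≤ Real.exp (2 * lam * ((k * (n - k) : ℕ) : ℝ)) := by
  set j := min k (n - k) with hj
  have hcast : ((n - k : ℕ) : ℝ) = (n:ℝ) - k := by
    rw [Nat.cast_sub hk]
  have hchoose : n.choose k = n.choose j := by
    rcases le_total k (n - k) with h | h
    · rw [hj, min_eq_left h]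
    · rw [hj, min_eq_right h, Nat.choose_symm hk]
  have h1 : (n.choose j : ℝ) ≤ ((n:ℝ) + 1)^j := by
    have : n.choose j ≤ (n+1)^j :=
      le_trans (Nat.choose_le_pow n j) (Nat.pow_le_pow_left (Nat.le_succ n) j)
    exact_mod_cast this
  have h2 : ((n:ℝ) + 1)^j ≤ Real.exp ((n:ℝ) * lam) ^ j :=
    pow_le_pow_left₀ (by positivity) hB j
  have h3 : Real.exp ((n:ℝ) * lam) ^ j = Real.exp ((j:ℝ) * ((n:ℝ) * lam)) := by
    rw [← Real.exp_nat_mul]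
  have hmin : (j : ℝ) * (n:ℝ) ≤ 2 * ((k * (n - k) : ℕ) : ℝ) := by
    push_cast [hcast]
    rcases le_total k (n - k) with h | h
    · rw [hj, min_eq_left h]
      have h' : (k:ℝ) ≤ (n:ℝ) - k := by
        have := hcast ▸ ((Nat.cast_le (α := ℝ)).mpr h)
        push_cast at this ⊢; linarith [this]
      push_cast
      nlinarith [Nat.cast_nonneg (α := ℝ) k]
    · rw [hj, min_eq_right h]
      have h' : (n:ℝ) - k ≤ (k:ℝ) := by
        have := (Nat.cast_le (α := ℝ)).mpr h
        rw [hcast] at this; linarith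
      push_cast [hcast]
      nlinarith [Nat.cast_nonneg (α := ℝ) n, (Nat.cast_le (α := ℝ)).mpr hk, hcast ▸ (Nat.cast_nonneg (α := ℝ) (n-k))]
  calc (n.choose k : ℝ) = (n.choose j : ℝ) := by rw [hchoose]
    _ ≤ ((n:ℝ) + 1)^j := h1
    _ ≤ Real.exp ((j:ℝ) * ((n:ℝ) * lam)) := h3 ▸ h2
    _ ≤ Real.exp (2 * lam * ((k * (n - k) : ℕ) : ℝ)) := by
        apply Real.exp_le_exp.mpr
        nlinarith [hmin, hlam]

lemma pointA (lam : ℝ) (hlam : 0 < lam) (n : ℕ) (hA : Real.exp ((n:ℝ) * lam) ≤ (n:ℝ) + 1)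
    (t : ℝ) :
    Real.exp (((n:ℝ)+2) * lam) * (2 * Real.exp (lam * t^2 / 2))
      ≤ ((n:ℝ)+1) * (Real.exp (lam * (t + 2)^2 / 2) + Real.exp (lam * (t - 2)^2 / 2)) := by
  have e1 : lam * (t + 2)^2 / 2 = lam * t^2 / 2 + (2*lam + 2*lam*t) := by ring
  have e2 : lam * (t - 2)^2 / 2 = lam * t^2 / 2 + (2*lam + -(2*lam*t)) := by ring
  have e3 : ((n:ℝ)+2) * lam = (n:ℝ)*lam + 2*lam := by ring
  rw [e1, e2, e3, Real.exp_add, Real.exp_add, Real.exp_add, Real.exp_add, Real.exp_add,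
    Real.exp_neg]
  set A := Real.exp (lam * t^2/2) with hA'
  set B := Real.exp (2*lam)
  set Cc := Real.exp (2*lam*t)
  set D := Real.exp ((n:ℝ)*lam)
  have hApos : 0 < A := Real.exp_pos _
  have hBpos : 0 < B := Real.exp_pos _
  have hCpos : 0 < Cc := Real.exp_pos _
  have hDpos : 0 < D := Real.exp_pos _
  have hC2 : 2 ≤ Cc + Cc⁻¹ := by
    rw [← sub_nonneg]
    have : Cc + Cc⁻¹ - 2 = (Cc - 1)^2 / Cc := by field_simp; ring
    rw [this]; positivity
  have expand : A * (B * Cc) + A * (B * Cc⁻¹) = A * B * (Cc + Cc⁻¹) := by ring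
  rw [expand]
  calc D * B * (2 * A) = (D * 2) * (A * B) := by ring
    _ ≤ (((n:ℝ)+1) * (Cc + Cc⁻¹)) * (A * B) := by
        apply mul_le_mul_of_nonneg_right _ (by positivity)
        have h1 : D * 2 ≤ ((n:ℝ)+1) * 2 := by nlinarith
        nlinarith [hC2, hDpos]
    _ = ((n:ℝ)+1) * (A * B * (Cc + Cc⁻¹)) := by ring

lemma key_ineq {α : Type*} (lam : ℝ) (hlam : 0 < lam) (n : ℕ)
    (T : Finset α) (K : α → ℕ) (u : α → ℝ)
    (hu : ∀ x ∈ T, u x = 2 * (K x : ℝ) - n)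
    (hK : ∀ x ∈ T, K x ≤ n)
    (hcard : ∀ k, ((T.filter (fun x => K x = k)).card : ℝ)
      ≤ (n.choose k : ℝ) * ((T.filter (fun x => K x = 0)).card : ℝ))
    (hc0n : (T.filter (fun x => K x = n)).card = (T.filter (fun x => K x = 0)).card) :
    Real.exp (((n:ℝ)+2) * lam) * (2 * ∑ x ∈ T, Real.exp (lam * (u x)^2 / 2))
      ≤ ((n:ℝ)+1) * ∑ x ∈ T, (Real.exp (lam * (u x + 2)^2 / 2) + Real.exp (lam * (u x - 2)^2 / 2)) := by
  rcases le_total (Real.exp ((n:ℝ) * lam)) ((n:ℝ) + 1) with hA | hB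
  · -- case A : termwise
    calc Real.exp (((n:ℝ)+2) * lam) * (2 * ∑ x ∈ T, Real.exp (lam * (u x)^2 / 2))
        = ∑ x ∈ T, Real.exp (((n:ℝ)+2) * lam) * (2 * Real.exp (lam * (u x)^2 / 2)) := by
          rw [Finset.mul_sum, Finset.mul_sum]
      _ ≤ ∑ x ∈ T, ((n:ℝ)+1) * (Real.exp (lam * (u x + 2)^2 / 2) + Real.exp (lam * (u x - 2)^2 / 2)) :=
          Finset.sum_le_sum fun x _ => pointA lam hlam n hA (u x)
      _ = ((n:ℝ)+1) * ∑ x ∈ T, (Real.exp (lam * (u x + 2)^2 / 2) + Real.exp (lam * (u x - 2)^2 / 2)) := by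
          rw [Finset.mul_sum]
  · -- case B
    set c0 : ℝ := ((T.filter (fun x => K x = 0)).card : ℝ) with hc0
    have hc0nn : 0 ≤ c0 := Nat.cast_nonneg _
    set E : ℝ := Real.exp (lam * ((n:ℝ)+2)^2 / 2) with hE
    -- upper bound on LHS sum
    have hfib : ∑ x ∈ T, Real.exp (lam * (u x)^2 / 2)
        = ∑ k ∈ Finset.range (n+1), ((T.filter (fun x => K x = k)).card : ℝ)
            * Real.exp (lam * (2*(k:ℝ) - n)^2 / 2) := by
      rw [← Finset.sum_fiberwise_of_maps_to
        (g := K) (t := Finset.range (n+1))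
        (fun x hx => Finset.mem_range.mpr (Nat.lt_succ_of_le (hK x hx)))
        (fun x => Real.exp (lam * (u x)^2 / 2))]
      refine Finset.sum_congr rfl fun k _ => ?_
      calc ∑ x ∈ T.filter (fun x => K x = k), Real.exp (lam * (u x)^2 / 2)
          = ∑ _x ∈ T.filter (fun x => K x = k), Real.exp (lam * (2*(k:ℝ) - n)^2 / 2) := by
            refine Finset.sum_congr rfl fun x hx => ?_
            obtain ⟨hxT, hxk⟩ := Finset.mem_filter.mp hx
            rw [hu x hxT, hxk]
        _ = ((T.filter (fun x => K x = k)).card : ℝ) * Real.exp (lam * (2*(k:ℝ) - n)^2 / 2) := by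
            rw [Finset.sum_const, nsmul_eq_mul]
    have hterm : ∀ k ∈ Finset.range (n+1),
        ((T.filter (fun x => K x = k)).card : ℝ) * Real.exp (lam * (2*(k:ℝ) - n)^2 / 2)
          ≤ c0 * Real.exp (lam * (n:ℝ)^2 / 2) := by
      intro k hk
      have hkn : k ≤ n := Nat.lt_succ_iff.mp (Finset.mem_range.mp hk)
      have h1 := hcard k
      have h2 := choose_le_exp lam hlam n k hkn hB
      have h3 : Real.exp (2 * lam * ((k * (n - k) : ℕ) : ℝ)) * Real.exp (lam * (2*(k:ℝ) - n)^2 / 2)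
          = Real.exp (lam * (n:ℝ)^2 / 2) := by
        rw [← Real.exp_add]
        congr 1
        have : ((k * (n - k) : ℕ) : ℝ) = (k:ℝ) * ((n:ℝ) - k) := by
          push_cast [Nat.cast_sub hkn]; ring
        rw [this]; ring
      have hexp : (0:ℝ) ≤ Real.exp (lam * (2*(k:ℝ) - n)^2 / 2) := (Real.exp_pos _).le
      calc ((T.filter (fun x => K x = k)).card : ℝ) * Real.exp (lam * (2*(k:ℝ) - n)^2 / 2)
          ≤ ((n.choose k : ℝ) * c0) * Real.exp (lam * (2*(k:ℝ) - n)^2 / 2) :=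
            mul_le_mul_of_nonneg_right h1 hexp
        _ ≤ (Real.exp (2 * lam * ((k * (n - k) : ℕ) : ℝ)) * c0) * Real.exp (lam * (2*(k:ℝ) - n)^2 / 2) := by
            apply mul_le_mul_of_nonneg_right _ hexp
            exact mul_le_mul_of_nonneg_right h2 hc0nn
        _ = c0 * (Real.exp (2 * lam * ((k * (n - k) : ℕ) : ℝ)) * Real.exp (lam * (2*(k:ℝ) - n)^2 / 2)) := by ring
        _ = c0 * Real.exp (lam * (n:ℝ)^2 / 2) := by rw [h3]
    have hupper : ∑ x ∈ T, Real.exp (lam * (u x)^2 / 2) ≤ ((n:ℝ)+1) * (c0 * Real.exp (lam * (n:ℝ)^2 / 2)) := by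
      rw [hfib]
      calc ∑ k ∈ Finset.range (n+1), ((T.filter (fun x => K x = k)).card : ℝ)
            * Real.exp (lam * (2*(k:ℝ) - n)^2 / 2)
          ≤ ∑ _k ∈ Finset.range (n+1), c0 * Real.exp (lam * (n:ℝ)^2 / 2) :=
            Finset.sum_le_sum hterm
        _ = ((n:ℝ)+1) * (c0 * Real.exp (lam * (n:ℝ)^2 / 2)) := by
            rw [Finset.sum_const, Finset.card_range, nsmul_eq_mul]; push_cast; ring
    -- lower bound on RHS sum
    have hlow : 2 * (c0 * E) ≤ ∑ x ∈ T, (Real.exp (lam * (u x + 2)^2 / 2) + Real.exp (lam * (u x - 2)^2 / 2)) := by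
      rw [Finset.sum_add_distrib]
      have l1 : c0 * E ≤ ∑ x ∈ T, Real.exp (lam * (u x + 2)^2 / 2) := by
        have sub1 : ∑ x ∈ T.filter (fun x => K x = n), Real.exp (lam * (u x + 2)^2 / 2)
            ≤ ∑ x ∈ T, Real.exp (lam * (u x + 2)^2 / 2) :=
          Finset.sum_le_sum_of_subset_of_nonneg (Finset.filter_subset _ _)
            (fun x _ _ => (Real.exp_pos _).le)
        have eq1 : ∑ x ∈ T.filter (fun x => K x = n), Real.exp (lam * (u x + 2)^2 / 2) = c0 * E := by
          calc ∑ x ∈ T.filter (fun x => K x = n), Real.exp (lam * (u x + 2)^2 / 2)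
              = ∑ _x ∈ T.filter (fun x => K x = n), E := by
                refine Finset.sum_congr rfl fun x hx => ?_
                obtain ⟨hxT, hxk⟩ := Finset.mem_filter.mp hx
                rw [hu x hxT, hxk, hE]
                congr 1; ring
            _ = c0 * E := by rw [Finset.sum_const, nsmul_eq_mul, hc0n]
        linarith [sub1, eq1.symm.le, eq1.le]
      have l2 : c0 * E ≤ ∑ x ∈ T, Real.exp (lam * (u x - 2)^2 / 2) := by
        have sub1 : ∑ x ∈ T.filter (fun x => K x = 0), Real.exp (lam * (u x - 2)^2 / 2)
            ≤ ∑ x ∈ T, Real.exp (lam * (u x - 2)^2 / 2) :=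
          Finset.sum_le_sum_of_subset_of_nonneg (Finset.filter_subset _ _)
            (fun x _ _ => (Real.exp_pos _).le)
        have eq1 : ∑ x ∈ T.filter (fun x => K x = 0), Real.exp (lam * (u x - 2)^2 / 2) = c0 * E := by
          calc ∑ x ∈ T.filter (fun x => K x = 0), Real.exp (lam * (u x - 2)^2 / 2)
              = ∑ _x ∈ T.filter (fun x => K x = 0), E := by
                refine Finset.sum_congr rfl fun x hx => ?_
                obtain ⟨hxT, hxk⟩ := Finset.mem_filter.mp hx
                rw [hu x hxT, hxk, hE]
                congr 1; push_cast; ring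
            _ = c0 * E := by rw [Finset.sum_const, nsmul_eq_mul]
        linarith [sub1, eq1.le]
      linarith [l1, l2]
    -- combine
    have hmid : Real.exp (((n:ℝ)+2) * lam) * Real.exp (lam * (n:ℝ)^2 / 2) ≤ E := by
      rw [hE, ← Real.exp_add]
      apply Real.exp_le_exp.mpr
      have hn0 : (0:ℝ) ≤ (n:ℝ) := Nat.cast_nonneg _
      nlinarith [hlam, hn0]
    have hEpos : 0 < E := Real.exp_pos _
    have hexpos : 0 < Real.exp (((n:ℝ)+2) * lam) := Real.exp_pos _
    calc Real.exp (((n:ℝ)+2) * lam) * (2 * ∑ x ∈ T, Real.exp (lam * (u x)^2 / 2))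
        ≤ Real.exp (((n:ℝ)+2) * lam) * (2 * (((n:ℝ)+1) * (c0 * Real.exp (lam * (n:ℝ)^2 / 2)))) := by
          apply mul_le_mul_of_nonneg_left _ hexpos.le
          linarith [hupper]
      _ = ((n:ℝ)+1) * (2 * (c0 * (Real.exp (((n:ℝ)+2) * lam) * Real.exp (lam * (n:ℝ)^2 / 2)))) := by ring
      _ ≤ ((n:ℝ)+1) * (2 * (c0 * E)) := by
          apply mul_le_mul_of_nonneg_left _ (by positivity)
          apply mul_le_mul_of_nonneg_left _ (by norm_num)
          exact mul_le_mul_of_nonneg_left hmid hc0nn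
      _ ≤ ((n:ℝ)+1) * ∑ x ∈ T, (Real.exp (lam * (u x + 2)^2 / 2) + Real.exp (lam * (u x - 2)^2 / 2)) := by
          apply mul_le_mul_of_nonneg_left hlow (by positivity)

lemma card_fiber_le {p : ℕ} (S : Finset (Fin p)) (i j : Fin p) (hiS : i ∉ S) (hjS : j ∉ S) (k : ℕ) :
    ((Finset.univ.filter (fun x : Fin p → Bool => x i = true ∧ x j = false)).filter
        (fun x => (S.filter (fun v => x v = true)).card = k)).card
      ≤ S.card.choose k *
        ((Finset.univ.filter (fun x : Fin p → Bool => x i = true ∧ x j = false)).filter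
        (fun x => (S.filter (fun v => x v = true)).card = 0)).card := by
  set T := Finset.univ.filter (fun x : Fin p → Bool => x i = true ∧ x j = false) with hT
  set K : (Fin p → Bool) → ℕ := fun x => (S.filter (fun v => x v = true)).card with hKdef
  have h := Finset.card_le_card_of_injOn
    (f := fun x : Fin p → Bool => (S.filter (fun v => x v = true),
        fun v => if v ∈ S then false else x v))
    (s := T.filter (fun x => K x = k))
    (t := (S.powersetCard k) ×ˢ (T.filter (fun x => K x = 0)))
    ?_ ?_
  · calc (T.filter (fun x => K x = k)).card
        ≤ ((S.powersetCard k) ×ˢ (T.filter (fun x => K x = 0))).card := h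
      _ = S.card.choose k * (T.filter (fun x => K x = 0)).card := by
          rw [Finset.card_product, Finset.card_powersetCard]
  · intro x hx
    obtain ⟨hxT, hxK⟩ := Finset.mem_filter.mp hx
    obtain ⟨hxi, hxj⟩ := (Finset.mem_filter.mp hxT).2
    refine Finset.mem_product.mpr ⟨?_, ?_⟩
    · exact Finset.mem_powersetCard.mpr ⟨Finset.filter_subset _ _, hxK⟩
    · refine Finset.mem_filter.mpr ⟨Finset.mem_filter.mpr ⟨Finset.mem_univ _, ?_, ?_⟩, ?_⟩
      · simp [if_neg hiS, hxi]
      · simp [if_neg hjS, hxj]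
      · simp only [hKdef]
        rw [Finset.card_eq_zero, Finset.filter_eq_empty_iff]
        intro v hv; simp [hv]
  · intro x1 h1 x2 h2 heq
    have hfst : S.filter (fun v => x1 v = true) = S.filter (fun v => x2 v = true) :=
      congrArg Prod.fst heq
    have hsnd : (fun v => if v ∈ S then false else x1 v) = (fun v => if v ∈ S then false else x2 v) :=
      congrArg Prod.snd heq
    funext v
    by_cases hv : v ∈ S
    · have hmem : (v ∈ S.filter (fun v => x1 v = true)) ↔ (v ∈ S.filter (fun v => x2 v = true)) := by
        rw [hfst]
      simp only [Finset.mem_filter, hv, true_and] at hmem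
      cases hx1 : x1 v <;> cases hx2 : x2 v <;> simp_all
    · have := congrFun hsnd v
      simpa [hv] using this

lemma card_fiber_flip {p : ℕ} (S : Finset (Fin p)) (i j : Fin p) (hiS : i ∉ S) (hjS : j ∉ S) :
    ((Finset.univ.filter (fun x : Fin p → Bool => x i = true ∧ x j = false)).filter
        (fun x => (S.filter (fun v => x v = true)).card = S.card)).card
      = ((Finset.univ.filter (fun x : Fin p → Bool => x i = true ∧ x j = false)).filter
        (fun x => (S.filter (fun v => x v = true)).card = 0)).card := by
  set T := Finset.univ.filter (fun x : Fin p → Bool => x i = true ∧ x j = false) with hT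
  set σ : (Fin p → Bool) → (Fin p → Bool) := fun x v => if v ∈ S then !(x v) else x v with hσ
  have hKσ : ∀ x : Fin p → Bool, (S.filter (fun v => σ x v = true)).card
      = S.card - (S.filter (fun v => x v = true)).card := by
    intro x
    have hfe : S.filter (fun v => σ x v = true) = S.filter (fun v => ¬ (x v = true)) := by
      apply Finset.filter_congr
      intro v hv; simp [hσ, hv]
    have hsum := Finset.card_filter_add_card_filter_not
      (s := S) (p := fun v => x v = true)
    rw [hfe]
    omega
  have hσT : ∀ x ∈ T, σ x ∈ T := by
    intro x hx
    obtain ⟨hxi, hxj⟩ := (Finset.mem_filter.mp hx).2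
    refine Finset.mem_filter.mpr ⟨Finset.mem_univ _, ?_, ?_⟩
    · simp [hσ, hiS, hxi]
    · simp [hσ, hjS, hxj]
  have hinv : ∀ x, σ (σ x) = x := by
    intro x; funext v; by_cases hv : v ∈ S <;> simp [hσ, hv]
  apply Finset.card_nbij' σ σ
  · intro x hx
    obtain ⟨hxT, hxK⟩ := Finset.mem_filter.mp hx
    refine Finset.mem_filter.mpr ⟨hσT x hxT, ?_⟩
    rw [hKσ x, hxK]; omega
  · intro x hx
    obtain ⟨hxT, hxK⟩ := Finset.mem_filter.mp hx
    refine Finset.mem_filter.mpr ⟨hσT x hxT, ?_⟩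
    rw [hKσ x, hxK]
    have : (S.filter (fun v => x v = true)).card ≤ S.card := Finset.card_filter_le _ _
    omega
  · intro x _; exact hinv x
  · intro x _; exact hinv x

lemma pair_transfer {p : ℕ} (C : Finset (Fin p)) (i j : Fin p) (hi : i ∈ C) (hj : j ∈ C)
    (hij : i ≠ j) (F : ℝ → ℝ) (bi bj bi' bj' : Bool) :
    ∑ x ∈ Finset.univ.filter (fun x : Fin p → Bool => x i = bi ∧ x j = bj),
        F (SCsum C x - confVal bi - confVal bj)
      = ∑ x ∈ Finset.univ.filter (fun x : Fin p → Bool => x i = bi' ∧ x j = bj'),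
        F (SCsum C x - confVal bi' - confVal bj') := by
  apply Finset.sum_nbij'
    (fun x => Function.update (Function.update x i bi') j bj')
    (fun x => Function.update (Function.update x i bi) j bj)
  · intro x _
    refine Finset.mem_filter.mpr ⟨Finset.mem_univ _, ?_, ?_⟩
    · rw [Function.update_of_ne hij, Function.update_self]
    · rw [Function.update_self]
  · intro x _
    refine Finset.mem_filter.mpr ⟨Finset.mem_univ _, ?_, ?_⟩
    · rw [Function.update_of_ne hij, Function.update_self]
    · rw [Function.update_self]
  · intro x hx
    obtain ⟨hxi, hxj⟩ := (Finset.mem_filter.mp hx).2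
    funext v
    rcases eq_or_ne v j with rfl | hvj
    · simp [Function.update_apply, hxj]
    · rcases eq_or_ne v i with rfl | hvi
      · simp [Function.update_apply, hij, hxi]
      · simp [Function.update_apply, hvj, hvi]
  · intro x hx
    obtain ⟨hxi, hxj⟩ := (Finset.mem_filter.mp hx).2
    funext v
    rcases eq_or_ne v j with rfl | hvj
    · simp [Function.update_apply, hxj]
    · rcases eq_or_ne v i with rfl | hvi
      · simp [Function.update_apply, hij, hxi]
      · simp [Function.update_apply, hvj, hvi]
  · intro x hx
    obtain ⟨hxi, hxj⟩ := (Finset.mem_filter.mp hx).2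
    have hupd : SCsum C (Function.update (Function.update x i bi') j bj')
        = SCsum C x - confVal (x i) + confVal bi' - confVal (x j) + confVal bj' := by
      rw [SCsum_update C _ hj, SCsum_update C x hi]
      try rw [Function.update_of_ne (Ne.symm hij)]
      try ring
    rw [hupd, hxi, hxj]
    congr 1
    ring

set_option maxHeartbeats 2000000 in
/-- Correlation lower bound for an `m`-clique with one edge removed. -/
theorem clique_minus_edge_corr {p m : ℕ} (lam : ℝ) (hlam : 0 < lam)
    (hm : 2 ≤ m) (hmp : m ≤ p)
    (C : Finset (Fin p)) (hC : C.card = m)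
    (G G' : SimpleGraph (Fin p))
    (hG : ∀ a b, G.Adj a b ↔ a ≠ b ∧ a ∈ C ∧ b ∈ C)
    (i j : Fin p) (hi : i ∈ C) (hj : j ∈ C) (hij : i ≠ j)
    (hG' : G' = G.deleteEdges {s(i, j)}) :
    isingCorr lam G' i j ≥
      1 - 2 * ((m : ℝ) - 1) * Real.exp lam /
        (Real.exp (((m : ℝ) - 1) * lam) + ((m : ℝ) - 1) * Real.exp lam) := by
  classical
  have hct : confVal true = 1 := rfl
  have hcf : confVal false = -1 := rfl
  -- the set S of other clique vertices
  set S : Finset (Fin p) := (C.erase i).erase j with hS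
  have hjCi : j ∈ C.erase i := Finset.mem_erase.mpr ⟨Ne.symm hij, hj⟩
  have hnS : S.card + 2 = m := by
    have h1 : (C.erase i).card = m - 1 := by rw [Finset.card_erase_of_mem hi, hC]
    have h2 : S.card = (C.erase i).card - 1 := by rw [hS, Finset.card_erase_of_mem hjCi]
    omega
  set n : ℕ := S.card with hn
  have hiS : i ∉ S := fun h => Finset.notMem_erase i C (Finset.mem_of_mem_erase h)
  have hjS : j ∉ S := Finset.notMem_erase _ _
  have hmR : (m:ℝ) = (n:ℝ) + 2 := by rw [← hnS]; push_cast; ring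
  -- configuration machinery
  set K : (Fin p → Bool) → ℕ := fun x => (S.filter (fun v => x v = true)).card with hK
  set TF := Finset.univ.filter (fun x : Fin p → Bool => x i = true ∧ x j = false) with hTF
  set V : (Fin p → Bool) → ℝ := fun x => Real.exp (lam * (SCsum C x)^2 / 2) with hV
  set Fp : ℝ → ℝ := fun t => Real.exp (lam * (t+2)^2 / 2) with hFp
  set Fm : ℝ → ℝ := fun t => Real.exp (lam * (t-2)^2 / 2) with hFm
  set F0 : ℝ → ℝ := fun t => Real.exp (lam * t^2 / 2) with hF0
  have hSC_TF : ∀ x ∈ TF, SCsum C x = 2 * (K x : ℝ) - (n:ℝ) := by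
    intro x hx
    obtain ⟨hxi, hxj⟩ := (Finset.mem_filter.mp hx).2
    have hKle : K x ≤ n := Finset.card_filter_le _ _
    have e1 : SCsum C x = confVal (x i) + SCsum (C.erase i) x := SCsum_erase C x hi
    have e2 : SCsum (C.erase i) x = confVal (x j) + SCsum S x := SCsum_erase _ x hjCi
    have hA : ∑ v ∈ S.filter (fun v => x v = true), confVal (x v) = (K x : ℝ) := by
      calc ∑ v ∈ S.filter (fun v => x v = true), confVal (x v)
          = ∑ _v ∈ S.filter (fun v => x v = true), (1:ℝ) :=
            Finset.sum_congr rfl (fun v hv => by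
              have h := (Finset.mem_filter.mp hv).2; simp [confVal, h])
        _ = (K x : ℝ) := by rw [Finset.sum_const, nsmul_eq_mul, mul_one]
    have hcardneg : ((S.filter (fun v => ¬ x v = true)).card : ℕ) = n - K x := by
      have hsum := Finset.card_filter_add_card_filter_not
        (s := S) (p := fun v => x v = true)
      simp only [hK]
      omega
    have hB : ∑ v ∈ S.filter (fun v => ¬ x v = true), confVal (x v) = -(((n:ℝ) - K x)) := by
      calc ∑ v ∈ S.filter (fun v => ¬ x v = true), confVal (x v)
          = ∑ _v ∈ S.filter (fun v => ¬ x v = true), (-1:ℝ) :=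
            Finset.sum_congr rfl (fun v hv => by
              have h := (Finset.mem_filter.mp hv).2
              simp only [Bool.not_eq_true] at h
              simp [confVal, h])
        _ = ((S.filter (fun v => ¬ x v = true)).card : ℝ) * (-1) := by
            rw [Finset.sum_const, nsmul_eq_mul]
        _ = -(((n:ℝ) - K x)) := by
            rw [hcardneg, Nat.cast_sub hKle]; ring
    have e3 : SCsum S x = (K x : ℝ) - ((n:ℝ) - K x) := by
      have hsplit := Finset.sum_filter_add_sum_filter_not S (fun v => x v = true)
        (fun v => confVal (x v))
      rw [SCsum, ← hsplit, hA, hB]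
      ring
    rw [e1, e2, e3, hxi, hxj, hct, hcf]
    ring
  have hKle' : ∀ x ∈ TF, K x ≤ n := fun x _ => Finset.card_filter_le _ _
  have hcard' : ∀ k, ((TF.filter (fun x => K x = k)).card : ℝ)
      ≤ ((n.choose k : ℕ) : ℝ) * ((TF.filter (fun x => K x = 0)).card : ℝ) := by
    intro k
    have h := card_fiber_le S i j hiS hjS k
    exact_mod_cast h
  have hc0n' : (TF.filter (fun x => K x = n)).card = (TF.filter (fun x => K x = 0)).card :=
    card_fiber_flip S i j hiS hjS
  -- weights
  set W : (Fin p → Bool) → ℝ := fun x => Real.exp (lam * isingEnergy G' x) with hW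
  set D : ℝ := ∑ x ∈ Finset.univ.filter (fun x : Fin p → Bool => x i = x j), W x with hD
  set N : ℝ := ∑ x ∈ Finset.univ.filter (fun x : Fin p → Bool => ¬ x i = x j), W x with hN
  have hEn : ∀ x : Fin p → Bool,
      isingEnergy G' x = ((SCsum C x)^2 - (m:ℝ))/2 - confVal (x i) * confVal (x j) := by
    intro x
    have := energy_formula C G G' hG i j hi hj hij hG' x
    rwa [hC] at this
  have hWeq : ∀ x : Fin p → Bool, x i = x j →
      W x = V x * (Real.exp (-(lam * (m:ℝ))/2) * Real.exp (-lam)) := by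
    intro x h
    have hcc : confVal (x i) * confVal (x j) = 1 := by rw [h]; cases x j <;> simp [confVal]
    show Real.exp (lam * isingEnergy G' x)
      = Real.exp (lam * (SCsum C x)^2 / 2) * (Real.exp (-(lam * (m:ℝ))/2) * Real.exp (-lam))
    rw [hEn x, hcc]
    rw [← Real.exp_add, ← Real.exp_add]
    congr 1
    ring
  have hWne : ∀ x : Fin p → Bool, ¬ x i = x j →
      W x = V x * (Real.exp (-(lam * (m:ℝ))/2) * Real.exp lam) := by
    intro x h
    have hcc : confVal (x i) * confVal (x j) = -1 := by
      cases h1 : x i <;> cases h2 : x j <;> simp_all [confVal]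
    show Real.exp (lam * isingEnergy G' x)
      = Real.exp (lam * (SCsum C x)^2 / 2) * (Real.exp (-(lam * (m:ℝ))/2) * Real.exp lam)
    rw [hEn x, hcc]
    rw [← Real.exp_add, ← Real.exp_add]
    congr 1
    ring
  set Q1 : ℝ := ∑ x ∈ Finset.univ.filter (fun x : Fin p → Bool => x i = x j), V x with hQ1def
  set Q2 : ℝ := ∑ x ∈ Finset.univ.filter (fun x : Fin p → Bool => ¬ x i = x j), V x with hQ2def
  have hDQ : D = Q1 * (Real.exp (-(lam * (m:ℝ))/2) * Real.exp (-lam)) := by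
    rw [hD, hQ1def, Finset.sum_mul]
    exact Finset.sum_congr rfl fun x hx => hWeq x ((Finset.mem_filter.mp hx).2)
  have hNQ : N = Q2 * (Real.exp (-(lam * (m:ℝ))/2) * Real.exp lam) := by
    rw [hN, hQ2def, Finset.sum_mul]
    exact Finset.sum_congr rfl fun x hx => hWne x ((Finset.mem_filter.mp hx).2)
  -- splitting into the four spin patterns
  have hsetTT : (Finset.univ.filter (fun x : Fin p → Bool => x i = x j)).filter
      (fun x => x i = true) = Finset.univ.filter (fun x : Fin p → Bool => x i = true ∧ x j = true) := by
    ext x; cases h1 : x i <;> cases h2 : x j <;> simp [h1, h2]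
  have hsetFF : (Finset.univ.filter (fun x : Fin p → Bool => x i = x j)).filter
      (fun x => ¬ x i = true) = Finset.univ.filter (fun x : Fin p → Bool => x i = false ∧ x j = false) := by
    ext x; cases h1 : x i <;> cases h2 : x j <;> simp [h1, h2]
  have hsetTF : (Finset.univ.filter (fun x : Fin p → Bool => ¬ x i = x j)).filter
      (fun x => x i = true) = Finset.univ.filter (fun x : Fin p → Bool => x i = true ∧ x j = false) := by
    ext x; cases h1 : x i <;> cases h2 : x j <;> simp [h1, h2]
  have hsetFT : (Finset.univ.filter (fun x : Fin p → Bool => ¬ x i = x j)).filter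
      (fun x => ¬ x i = true) = Finset.univ.filter (fun x : Fin p → Bool => x i = false ∧ x j = true) := by
    ext x; cases h1 : x i <;> cases h2 : x j <;> simp [h1, h2]
  -- transfers
  have tTT := pair_transfer C i j hi hj hij Fp true true true false
  have tFF := pair_transfer C i j hi hj hij Fm false false true false
  have tFT := pair_transfer C i j hi hj hij F0 false true true false
  have eTT : ∑ x ∈ Finset.univ.filter (fun x : Fin p → Bool => x i = true ∧ x j = true), V x
      = ∑ x ∈ TF, Fp (SCsum C x) := by
    calc ∑ x ∈ Finset.univ.filter (fun x : Fin p → Bool => x i = true ∧ x j = true), V x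
        = ∑ x ∈ Finset.univ.filter (fun x : Fin p → Bool => x i = true ∧ x j = true),
            Fp (SCsum C x - confVal true - confVal true) := by
          refine Finset.sum_congr rfl fun x _ => ?_
          show Real.exp (lam * (SCsum C x)^2 / 2)
            = Real.exp (lam * ((SCsum C x - confVal true - confVal true) + 2)^2 / 2)
          simp only [hct, hcf]
          congr 1; ring
      _ = ∑ x ∈ Finset.univ.filter (fun x : Fin p → Bool => x i = true ∧ x j = false),
            Fp (SCsum C x - confVal true - confVal false) := tTT
      _ = ∑ x ∈ TF, Fp (SCsum C x) := by
          refine Finset.sum_congr rfl fun x _ => ?_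
          simp only [hct, hcf]
          congr 1; ring
  have eFF : ∑ x ∈ Finset.univ.filter (fun x : Fin p → Bool => x i = false ∧ x j = false), V x
      = ∑ x ∈ TF, Fm (SCsum C x) := by
    calc ∑ x ∈ Finset.univ.filter (fun x : Fin p → Bool => x i = false ∧ x j = false), V x
        = ∑ x ∈ Finset.univ.filter (fun x : Fin p → Bool => x i = false ∧ x j = false),
            Fm (SCsum C x - confVal false - confVal false) := by
          refine Finset.sum_congr rfl fun x _ => ?_
          show Real.exp (lam * (SCsum C x)^2 / 2)
            = Real.exp (lam * ((SCsum C x - confVal false - confVal false) - 2)^2 / 2)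
          simp only [hct, hcf]
          congr 1; ring
      _ = ∑ x ∈ Finset.univ.filter (fun x : Fin p → Bool => x i = true ∧ x j = false),
            Fm (SCsum C x - confVal true - confVal false) := tFF
      _ = ∑ x ∈ TF, Fm (SCsum C x) := by
          refine Finset.sum_congr rfl fun x _ => ?_
          simp only [hct, hcf]
          congr 1; ring
  have eFT : ∑ x ∈ Finset.univ.filter (fun x : Fin p → Bool => x i = false ∧ x j = true), V x
      = ∑ x ∈ TF, V x := by
    calc ∑ x ∈ Finset.univ.filter (fun x : Fin p → Bool => x i = false ∧ x j = true), V x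
        = ∑ x ∈ Finset.univ.filter (fun x : Fin p → Bool => x i = false ∧ x j = true),
            F0 (SCsum C x - confVal false - confVal true) := by
          refine Finset.sum_congr rfl fun x _ => ?_
          show Real.exp (lam * (SCsum C x)^2 / 2)
            = Real.exp (lam * (SCsum C x - confVal false - confVal true)^2 / 2)
          simp only [hct, hcf]
          congr 1; ring
      _ = ∑ x ∈ Finset.univ.filter (fun x : Fin p → Bool => x i = true ∧ x j = false),
            F0 (SCsum C x - confVal true - confVal false) := tFT
      _ = ∑ x ∈ TF, V x := by
          refine Finset.sum_congr rfl fun x _ => ?_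
          show Real.exp (lam * (SCsum C x - confVal true - confVal false)^2 / 2)
            = Real.exp (lam * (SCsum C x)^2 / 2)
          simp only [hct, hcf]
          congr 1; ring
  have hQ1 : Q1 = ∑ x ∈ TF, (Fp (SCsum C x) + Fm (SCsum C x)) := by
    rw [hQ1def,
      ← Finset.sum_filter_add_sum_filter_not
        (Finset.univ.filter (fun x : Fin p → Bool => x i = x j)) (fun x => x i = true) V,
      hsetTT, hsetFF, eTT, eFF, Finset.sum_add_distrib]
  have hQ2 : Q2 = 2 * ∑ x ∈ TF, V x := by
    rw [hQ2def,
      ← Finset.sum_filter_add_sum_filter_not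
        (Finset.univ.filter (fun x : Fin p → Bool => ¬ x i = x j)) (fun x => x i = true) V,
      hsetTF, hsetFT, eFT, ← hTF]
    ring
  -- the key inequality
  have hkey := key_ineq lam hlam n TF K (fun x => SCsum C x) hSC_TF hKle' hcard' hc0n'
  have hmain : Real.exp ((m:ℝ)*lam) * Q2 ≤ ((m:ℝ) - 1) * Q1 := by
    rw [hQ1, hQ2, hmR, show (n:ℝ) + 2 - 1 = (n:ℝ) + 1 by ring]
    exact hkey
  -- from hmain to the D/N inequality
  have hDN : Real.exp (((m:ℝ)-1)*lam) * N ≤ ((m:ℝ)-1) * Real.exp lam * D := by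
    rw [hDQ, hNQ]
    have hee : Real.exp (((m:ℝ)-1)*lam) * Real.exp lam = Real.exp ((m:ℝ)*lam) := by
      rw [← Real.exp_add]; congr 1; ring
    have hee2 : Real.exp lam * Real.exp (-lam) = 1 := by
      rw [← Real.exp_add]; simp
    have lhs_eq : Real.exp (((m:ℝ)-1)*lam) * (Q2 * (Real.exp (-(lam * (m:ℝ))/2) * Real.exp lam))
        = (Real.exp ((m:ℝ)*lam) * Q2) * Real.exp (-(lam * (m:ℝ))/2) := by
      rw [← hee]; ring
    have rhs_eq : ((m:ℝ)-1) * Real.exp lam * (Q1 * (Real.exp (-(lam * (m:ℝ))/2) * Real.exp (-lam)))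
        = (((m:ℝ)-1) * Q1) * Real.exp (-(lam * (m:ℝ))/2) := by
      calc ((m:ℝ)-1) * Real.exp lam * (Q1 * (Real.exp (-(lam * (m:ℝ))/2) * Real.exp (-lam)))
          = (((m:ℝ)-1) * Q1) * Real.exp (-(lam * (m:ℝ))/2) * (Real.exp lam * Real.exp (-lam)) := by
            ring
        _ = (((m:ℝ)-1) * Q1) * Real.exp (-(lam * (m:ℝ))/2) := by rw [hee2, mul_one]
    rw [lhs_eq, rhs_eq]
    exact mul_le_mul_of_nonneg_right hmain (Real.exp_pos _).le
  -- correlation as (D-N)/(D+N)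
  have hZ : isingZ lam G' = D + N := by
    rw [isingZ, hD, hN]
    exact (Finset.sum_filter_add_sum_filter_not Finset.univ (fun x : Fin p → Bool => x i = x j) W).symm
  have hNum : ∑ x : Fin p → Bool, W x * (confVal (x i) * confVal (x j)) = D - N := by
    rw [sub_eq_add_neg,
      ← Finset.sum_filter_add_sum_filter_not Finset.univ (fun x : Fin p → Bool => x i = x j)
        (fun x => W x * (confVal (x i) * confVal (x j)))]
    congr 1
    · rw [hD]
      refine Finset.sum_congr rfl fun x hx => ?_
      have h := (Finset.mem_filter.mp hx).2
      have hcc : confVal (x i) * confVal (x j) = 1 := by rw [h]; cases x j <;> simp [confVal]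
      rw [hcc, mul_one]
    · rw [hN, ← Finset.sum_neg_distrib]
      refine Finset.sum_congr rfl fun x hx => ?_
      have h := (Finset.mem_filter.mp hx).2
      have hcc : confVal (x i) * confVal (x j) = -1 := by
        cases h1 : x i <;> cases h2 : x j <;> simp_all [confVal]
      rw [hcc]; ring
  have hZpos : 0 < isingZ lam G' := by
    rw [isingZ]
    exact Finset.sum_pos (fun x _ => Real.exp_pos _) Finset.univ_nonempty
  have hDNpos : 0 < D + N := hZ ▸ hZpos
  have hD0 : 0 ≤ D := Finset.sum_nonneg fun x _ => (Real.exp_pos _).le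
  have hN0 : 0 ≤ N := Finset.sum_nonneg fun x _ => (Real.exp_pos _).le
  have hcorr : isingCorr lam G' i j = (D - N) / (D + N) := by
    rw [isingCorr]
    calc ∑ x : Fin p → Bool, isingP lam G' x * (confVal (x i) * confVal (x j))
        = ∑ x : Fin p → Bool, (W x * (confVal (x i) * confVal (x j))) / isingZ lam G' := by
          refine Finset.sum_congr rfl fun x _ => ?_
          rw [isingP, hW]
          ring
      _ = (∑ x : Fin p → Bool, W x * (confVal (x i) * confVal (x j))) / isingZ lam G' := by
          rw [Finset.sum_div]
      _ = (D - N) / (D + N) := by rw [hNum, hZ]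
  -- final algebra
  have hm1 : (1:ℝ) ≤ (m:ℝ) - 1 := by
    have : (2:ℝ) ≤ (m:ℝ) := by exact_mod_cast hm
    linarith
  have hRpos : 0 < Real.exp (((m:ℝ)-1)*lam) + ((m:ℝ)-1) * Real.exp lam := by
    have h1 := Real.exp_pos (((m:ℝ)-1)*lam)
    have h2 := Real.exp_pos lam
    nlinarith
  rw [hcorr, ge_iff_le]
  have e1 : 1 - (D - N)/(D + N) = 2 * N / (D + N) := by
    field_simp
    ring
  have e2 : 2 * N / (D + N)
      ≤ 2 * ((m:ℝ) - 1) * Real.exp lam / (Real.exp (((m:ℝ)-1)*lam) + ((m:ℝ)-1) * Real.exp lam) := by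
    rw [div_le_div_iff₀ hDNpos hRpos]
    have h2 := Real.exp_pos lam
    nlinarith [hDN, hN0, hD0]
  linarith [e1, e2]

end
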